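/- Let k be a field, n ≥ 1, F the free group on generators t_1, …, t_n, Λ = MonoidAlgebra k F, ε : Λ → k the augmentation, and ℓ the length function on Λ. Then for every γ ∈ Λ: (i) there is a unique family (γ_1, …, γ_n) in Λ with γ = ε(γ)·1 + Σ_{i=1}^n (t_i − 1)·γ_i, and this family satisfies ℓ(γ_i) ≤ ℓ(γ) for every i; moreover, if ℓ(γ_i) = ℓ(γ) ≥ 1 for some i, then γ has in its support a reduced word of length ℓ(γ) whose first letter is t_i^{-1}; (ii) the analogous statement holds with t_i^{-1} − 1 in place of t_i − 1: there is a unique family (γ̄_1, …, γ̄_n) with γ = ε(γ)·1 + Σ_{i=1}^n (t_i^{-1} − 1)·γ̄_i, ℓ(γ̄_i) ≤ ℓ(γ), and equality with ℓ(γ) ≥ 1 forces a word of length ℓ(γ) in the support of γ beginning with t_i. -/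

import Mathlib

/-- The augmentation map of the group algebra of the free group of rank `n`:
the `k`-algebra homomorphism sending every group element to `1`. -/
noncomputable def freeGroupAug (k : Type*) [CommRing k] (n : ℕ) :
    MonoidAlgebra k (FreeGroup (Fin n)) →ₐ[k] k :=
  MonoidAlgebra.lift k k (FreeGroup (Fin n)) 1

/-- The length of a free polynomial: the maximal reduced-word length over its support
(with `0` for the zero polynomial). -/
noncomputable def flen {k : Type*} [CommRing k] {n : ℕ}
    (γ : MonoidAlgebra k (FreeGroup (Fin n))) : ℕ :=
  γ.coeff.support.sup fun w => (FreeGroup.toWord w).length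

namespace FoxAux

@[ext] structure GG (k : Type*) [CommRing k] (n : ℕ) where
  v : Fin n → MonoidAlgebra k (FreeGroup (Fin n))
  g : FreeGroup (Fin n)

namespace GG
variable {k : Type*} [CommRing k] {n : ℕ}

noncomputable instance : Group (GG k n) where
  mul a b := ⟨fun i => a.v i * MonoidAlgebra.of k _ b.g + b.v i, a.g * b.g⟩
  one := ⟨0, 1⟩
  inv a := ⟨fun i => -(a.v i * MonoidAlgebra.of k _ a.g⁻¹), a.g⁻¹⟩
  mul_assoc a b c := by
    refine GG.ext (funext fun i => ?_) ?_
    · show (a.v i * _ + b.v i) * _ + c.v i = a.v i * MonoidAlgebra.of k _ (b.g * c.g) + (b.v i * _ + c.v i)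
      simp [add_mul, mul_assoc, add_assoc]
    · exact mul_assoc _ _ _
  one_mul a := by
    refine GG.ext (funext fun i => ?_) ?_
    · show (0 : MonoidAlgebra k _) * _ + a.v i = a.v i; simp
    · exact one_mul _
  mul_one a := by
    refine GG.ext (funext fun i => ?_) ?_
    · show a.v i * MonoidAlgebra.of k _ (1 : FreeGroup (Fin n)) + 0 = a.v i
      rw [map_one, mul_one, add_zero]
    · exact mul_one _
  inv_mul_cancel a := by
    refine GG.ext (funext fun i => ?_) ?_
    · show -(a.v i * MonoidAlgebra.of k _ a.g⁻¹) * MonoidAlgebra.of k _ a.g + a.v i = 0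
      rw [neg_mul, mul_assoc, ← map_mul, inv_mul_cancel, map_one, mul_one, neg_add_cancel]
    · exact inv_mul_cancel _

@[simp] lemma mul_v (a b : GG k n) : (a * b).v = fun i => a.v i * MonoidAlgebra.of k _ b.g + b.v i := rfl
@[simp] lemma mul_g (a b : GG k n) : (a * b).g = a.g * b.g := rfl
@[simp] lemma one_v : (1 : GG k n).v = 0 := rfl
@[simp] lemma one_g : (1 : GG k n).g = 1 := rfl
@[simp] lemma inv_v (a : GG k n) : (a⁻¹).v = fun i => -(a.v i * MonoidAlgebra.of k _ a.g⁻¹) := rfl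
@[simp] lemma inv_g (a : GG k n) : (a⁻¹).g = a.g⁻¹ := rfl

end GG

end FoxAux

namespace FoxAux
variable {k : Type*} [CommRing k] {n : ℕ}

/-- generator images -/
noncomputable def gen (k : Type*) [CommRing k] {n : ℕ} (b : Bool) (j : Fin n) : GG k n :=
  ⟨Pi.single j (if b then 1 else -(MonoidAlgebra.of k _ (FreeGroup.of j))), FreeGroup.of j⟩

noncomputable def fox (k : Type*) [CommRing k] {n : ℕ} (b : Bool) :
    FreeGroup (Fin n) →* GG k n :=
  FreeGroup.lift (gen k b)

noncomputable def d (k : Type*) [CommRing k] {n : ℕ} (b : Bool) (w : FreeGroup (Fin n)) :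
    Fin n → MonoidAlgebra k (FreeGroup (Fin n)) :=
  (fox k b w).v

lemma fox_g (b : Bool) (w : FreeGroup (Fin n)) : (fox k b w).g = w := by
  induction w using FreeGroup.induction_on with
  | C1 => rw [map_one]; rfl
  | of x =>
      show (fox k b (FreeGroup.of x)).g = FreeGroup.of x
      rw [fox, FreeGroup.lift_apply_of]
      rfl
  | inv_of x hx =>
      show (fox k b (FreeGroup.of x)⁻¹).g = (FreeGroup.of x)⁻¹
      rw [map_inv, GG.inv_g]
      exact congrArg Inv.inv hx
  | mul x y hx hy => rw [map_mul, GG.mul_g, hx, hy]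

lemma d_one (b : Bool) : d k b (1 : FreeGroup (Fin n)) = 0 := by
  rw [d, map_one]; rfl

lemma d_of (b : Bool) (j : Fin n) :
    d k b (FreeGroup.of j) = Pi.single j (if b then 1 else -(MonoidAlgebra.of k _ (FreeGroup.of j))) := by
  rw [d, fox, FreeGroup.lift_apply_of]; rfl

lemma d_mul (b : Bool) (x y : FreeGroup (Fin n)) :
    d k b (x * y) = fun i => d k b x i * MonoidAlgebra.of k _ y + d k b y i := by
  rw [d, map_mul, GG.mul_v, fox_g]; rfl

lemma d_inv (b : Bool) (x : FreeGroup (Fin n)) :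
    d k b x⁻¹ = fun i => -(d k b x i * MonoidAlgebra.of k _ x⁻¹) := by
  rw [d, map_inv, GG.inv_v, fox_g]; rfl

/-- the twisted generators -/
def tb (b : Bool) (i : Fin n) : FreeGroup (Fin n) := cond b (FreeGroup.of i) (FreeGroup.of i)⁻¹

lemma d_tb (b : Bool) (j : Fin n) : d k b (tb b j) = Pi.single j 1 := by
  cases b with
  | true => rw [tb, cond_true, d_of, if_pos rfl]
  | false =>
    rw [tb, cond_false, d_inv, d_of, if_neg (by simp)]
    funext i
    rcases eq_or_ne i j with rfl | h
    · simp only [Pi.single_eq_same, neg_mul, neg_neg, ← map_mul, mul_inv_cancel, map_one]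
    · simp [Pi.single_eq_of_ne h]

lemma d_tb_inv (b : Bool) (j : Fin n) :
    d k b (tb b j)⁻¹ = Pi.single j (-(MonoidAlgebra.of k _ (tb b j)⁻¹)) := by
  cases b with
  | true =>
    rw [tb, cond_true, d_inv, d_of, if_pos rfl]
    funext i
    rcases eq_or_ne i j with rfl | h
    · simp
    · simp [Pi.single_eq_of_ne h]
  | false =>
    rw [tb, cond_false, inv_inv, d_of, if_neg (by simp)]

end FoxAux
namespace FoxAux
variable {k : Type*} [CommRing k] {n : ℕ}

lemma pure_eq_of (x : Fin n) : (pure x : FreeGroup (Fin n)) = FreeGroup.of x := rfl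

lemma sum_single_mul (x : Fin n) (c : MonoidAlgebra k (FreeGroup (Fin n)))
    (f : Fin n → MonoidAlgebra k (FreeGroup (Fin n))) :
    ∑ i : Fin n, f i *
      Pi.single (M := fun _ => MonoidAlgebra k (FreeGroup (Fin n))) x c i = f x * c := by
  rw [Finset.sum_eq_single x]
  · rw [Pi.single_eq_same]
  · intro i _ h; rw [Pi.single_eq_of_ne h, mul_zero]
  · intro h; exact absurd (Finset.mem_univ x) h

lemma of_eq (b : Bool) (w : FreeGroup (Fin n)) :
    MonoidAlgebra.of k (FreeGroup (Fin n)) w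
      = 1 + ∑ i : Fin n, (MonoidAlgebra.of k (FreeGroup (Fin n)) (tb b i) - 1) * d k b w i := by
  induction w using FreeGroup.induction_on with
  | C1 => rw [map_one, d_one]; simp
  | of x =>
    rw [d_of, sum_single_mul]
    cases b with
    | true =>
      rw [if_pos rfl, mul_one, tb, cond_true]
      noncomm_ring
    | false =>
      rw [if_neg (by simp), tb, cond_false, mul_neg, sub_mul, one_mul, ← map_mul,
        inv_mul_cancel, map_one]
      noncomm_ring
  | inv_of x _ =>
    rw [d_inv]
    simp only [d_of]
    have step : ∀ i : Fin n,
        (MonoidAlgebra.of k (FreeGroup (Fin n)) (tb b i) - 1) *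
          -(Pi.single (M := fun _ => MonoidAlgebra k (FreeGroup (Fin n))) x
              (if b then 1 else -(MonoidAlgebra.of k _ (FreeGroup.of x))) i *
            MonoidAlgebra.of k _ (FreeGroup.of x)⁻¹)
        = (MonoidAlgebra.of k (FreeGroup (Fin n)) (tb b i) - 1) *
            Pi.single (M := fun _ => MonoidAlgebra k (FreeGroup (Fin n))) x
              (-((if b then 1 else -(MonoidAlgebra.of k _ (FreeGroup.of x))) *
                MonoidAlgebra.of k _ (FreeGroup.of x)⁻¹)) i := by
      intro i
      rcases eq_or_ne i x with rfl | h
      · rw [Pi.single_eq_same, Pi.single_eq_same]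
      · rw [Pi.single_eq_of_ne h, Pi.single_eq_of_ne h, zero_mul, neg_zero]
    rw [Finset.sum_congr rfl fun i _ => step i, sum_single_mul]
    cases b with
    | true =>
      rw [if_pos rfl, one_mul, tb, cond_true, mul_neg, sub_mul, ← map_mul,
        mul_inv_cancel, map_one, one_mul]
      noncomm_ring
    | false =>
      rw [if_neg (by simp), tb, cond_false, neg_mul, neg_neg, ← map_mul,
        mul_inv_cancel, map_one, mul_one]
      noncomm_ring
  | mul x y hx hy =>
    rw [map_mul, d_mul]
    have expand : ∀ i : Fin n,
        (MonoidAlgebra.of k (FreeGroup (Fin n)) (tb b i) - 1) *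
          (fun i => d k b x i * MonoidAlgebra.of k _ y + d k b y i) i
        = (MonoidAlgebra.of k (FreeGroup (Fin n)) (tb b i) - 1) * d k b x i *
            MonoidAlgebra.of k (FreeGroup (Fin n)) y
          + (MonoidAlgebra.of k (FreeGroup (Fin n)) (tb b i) - 1) * d k b y i := by
      intro i
      show _ * (_ + _) = _
      noncomm_ring
    rw [Finset.sum_congr rfl fun i _ => expand i, Finset.sum_add_distrib, ← Finset.sum_mul,
      hx]
    rw [add_mul, one_mul]
    nth_rewrite 1 [hy]
    abel

end FoxAux

namespace FoxAux
variable {k : Type*} [CommRing k] {n : ℕ}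

noncomputable def D (k : Type*) [CommRing k] {n : ℕ} (b : Bool) (i : Fin n) :
    MonoidAlgebra k (FreeGroup (Fin n)) →ₗ[k] MonoidAlgebra k (FreeGroup (Fin n)) :=
  (Finsupp.lsum k fun w => LinearMap.toSpanSingleton k _ (d k b w i)) ∘ₗ
    (MonoidAlgebra.coeffLinearEquiv k).toLinearMap

lemma D_single (b : Bool) (i : Fin n) (w : FreeGroup (Fin n)) (c : k) :
    D k b i (MonoidAlgebra.single w c) = c • d k b w i := by
  rw [D]
  exact Finsupp.sum_single_index (by simp)

lemma gamma_eq (b : Bool) (γ : MonoidAlgebra k (FreeGroup (Fin n))) :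
    γ = freeGroupAug k n γ • (1 : MonoidAlgebra k (FreeGroup (Fin n)))
      + ∑ i : Fin n, (MonoidAlgebra.of k (FreeGroup (Fin n)) (tb b i) - 1) * D k b i γ := by
  induction γ using MonoidAlgebra.induction_linear with
  | zero => simp
  | add f g hf hg =>
    rw [map_add, add_smul]
    conv_lhs => rw [hf, hg]
    have : ∀ i : Fin n, (MonoidAlgebra.of k (FreeGroup (Fin n)) (tb b i) - 1) * D k b i (f + g)
        = (MonoidAlgebra.of k (FreeGroup (Fin n)) (tb b i) - 1) * D k b i f
          + (MonoidAlgebra.of k (FreeGroup (Fin n)) (tb b i) - 1) * D k b i g := by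
      intro i; rw [map_add, mul_add]
    rw [Finset.sum_congr rfl fun i _ => this i, Finset.sum_add_distrib]
    abel
  | single w c =>
    have haug : freeGroupAug k n (MonoidAlgebra.single w c) = c := by
      rw [freeGroupAug, MonoidAlgebra.lift_single]
      simp
    rw [haug]
    have : ∀ i : Fin n, (MonoidAlgebra.of k (FreeGroup (Fin n)) (tb b i) - 1) *
        D k b i (MonoidAlgebra.single w c)
        = c • ((MonoidAlgebra.of k (FreeGroup (Fin n)) (tb b i) - 1) * d k b w i) := by
      intro i; rw [D_single, mul_smul_comm]
    rw [Finset.sum_congr rfl fun i _ => this i, ← Finset.smul_sum, ← smul_add, ← of_eq b w]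
    rw [MonoidAlgebra.of_apply, MonoidAlgebra.smul_single', mul_one]

lemma D_tb_mul (b : Bool) (i j : Fin n) (x : MonoidAlgebra k (FreeGroup (Fin n))) :
    D k b i ((MonoidAlgebra.of k (FreeGroup (Fin n)) (tb b j) - 1) * x)
      = if i = j then x else 0 := by
  induction x using MonoidAlgebra.induction_linear with
  | zero => rw [mul_zero, map_zero]; simp
  | add f g hf hg =>
    rw [mul_add, map_add, hf, hg]
    split_ifs <;> simp
  | single w c =>
    have : (MonoidAlgebra.of k (FreeGroup (Fin n)) (tb b j) - 1) * MonoidAlgebra.single w c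
        = MonoidAlgebra.single (tb b j * w) c - MonoidAlgebra.single w c := by
      rw [sub_mul, one_mul, MonoidAlgebra.of_apply, MonoidAlgebra.single_mul_single, one_mul]
    rw [this, map_sub, D_single, D_single, d_mul, d_tb]
    beta_reduce
    rcases eq_or_ne i j with rfl | h
    · rw [if_pos rfl, Pi.single_eq_same, one_mul, smul_add, add_sub_cancel_right,
        MonoidAlgebra.of_apply, MonoidAlgebra.smul_single', mul_one]
    · rw [if_neg h, Pi.single_eq_of_ne h, zero_mul, zero_add, sub_self]

lemma eq_zero_of_sum (b : Bool) (e : Fin n → MonoidAlgebra k (FreeGroup (Fin n)))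
    (h : ∑ j : Fin n, (MonoidAlgebra.of k (FreeGroup (Fin n)) (tb b j) - 1) * e j = 0) :
    e = 0 := by
  funext i
  have h2 := congrArg (D k b i) h
  rw [map_sum, map_zero] at h2
  rw [Finset.sum_congr rfl (fun j _ => D_tb_mul b i j (e j))] at h2
  simpa using h2

end FoxAux

namespace FoxAux
variable {k : Type*} [CommRing k] {n : ℕ}

lemma toWord_tail {w : FreeGroup (Fin n)} {a : Fin n × Bool} {L : List (Fin n × Bool)}
    (h : w.toWord = a :: L) : (FreeGroup.mk L).toWord = L := by
  have h2 : FreeGroup.reduce (a :: L) = a :: L := by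
    conv_lhs => rw [← h, FreeGroup.reduce_toWord]
    exact h.symm ▸ rfl
  rw [FreeGroup.toWord_mk]
  rw [FreeGroup.reduce.cons] at h2
  cases hr : FreeGroup.reduce L with
  | nil =>
    rw [hr] at h2
    simp only [List.casesOn] at h2
    injection h2 with _ h3
  | cons bb t =>
    rw [hr] at h2
    simp only [List.casesOn] at h2
    split_ifs at h2 with hcond
    · exfalso
      have hlen : (FreeGroup.reduce L).length ≤ L.length :=
        FreeGroup.Red.length_le FreeGroup.reduce.red
      rw [hr, h2] at hlen
      simp only [List.length_cons] at hlen
      omega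
    · injection h2 with _ h3

lemma mk_cons_tb (b : Bool) (j : Fin n) (L : List (Fin n × Bool)) :
    FreeGroup.mk ((j, b) :: L) = tb b j * FreeGroup.mk L := by
  rw [show ((j, b) :: L) = [(j, b)] ++ L from rfl, ← FreeGroup.mul_mk]
  congr 1
  cases b with
  | true => rfl
  | false =>
    rw [tb, cond_false, show FreeGroup.of j = FreeGroup.mk [(j, true)] from rfl,
      FreeGroup.inv_mk]
    simp [FreeGroup.invRev]

lemma mk_cons_tb_inv (b : Bool) (j : Fin n) (L : List (Fin n × Bool)) :
    FreeGroup.mk ((j, !b) :: L) = (tb b j)⁻¹ * FreeGroup.mk L := by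
  rw [show ((j, !b) :: L) = [(j, !b)] ++ L from rfl, ← FreeGroup.mul_mk]
  congr 1
  cases b with
  | true =>
    rw [tb, cond_true, show FreeGroup.of j = FreeGroup.mk [(j, true)] from rfl,
      FreeGroup.inv_mk]
    simp [FreeGroup.invRev]
  | false => rw [tb, cond_false, inv_inv]; rfl

lemma key (b : Bool) (i : Fin n) :
    ∀ (m : ℕ) (w : FreeGroup (Fin n)), w.toWord.length ≤ m →
      ∀ u ∈ (d k b w i).coeff.support,
        u.toWord.length ≤ w.toWord.length ∧
        (u.toWord.length = w.toWord.length → 1 ≤ w.toWord.length →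
          w.toWord.head? = some (i, !b)) := by
  intro m
  induction m with
  | zero =>
    intro w hw u hu
    have h0 : w.toWord = [] := List.eq_nil_of_length_eq_zero (Nat.le_zero.mp hw)
    rw [FreeGroup.toWord_eq_nil_iff.mp h0, d_one] at hu
    simp at hu
  | succ m IH =>
    intro w hw u hu
    cases hW : w.toWord with
    | nil =>
      rw [FreeGroup.toWord_eq_nil_iff.mp hW, d_one] at hu
      simp at hu
    | cons a L =>
      obtain ⟨j, c⟩ := a
      have hL : (FreeGroup.mk L).toWord = L := toWord_tail hW
      have hWlen : w.toWord.length = L.length + 1 := by rw [hW]; rfl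
      have hLm : (FreeGroup.mk L).toWord.length ≤ m := by
        rw [hL]; omega
      by_cases hc : c = b
      · -- first letter has the "positive" sign: all of `d` is strictly shorter
        have hwtb : w = tb b j * FreeGroup.mk L := by
          rw [← FreeGroup.mk_toWord (x := w), hW, hc, mk_cons_tb]
        have hdw : d k b w i
            = d k b (tb b j) i * MonoidAlgebra.of k _ (FreeGroup.mk L)
              + d k b (FreeGroup.mk L) i := by
          conv_lhs => rw [hwtb, d_mul]
        have hlt : u.toWord.length ≤ L.length := by
          rw [hdw] at hu
          rcases Finset.mem_union.mp (Finsupp.support_add hu) with h1 | h1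
          · rw [d_tb] at h1
            rcases eq_or_ne i j with rfl | hij
            · rw [Pi.single_eq_same, one_mul] at h1
              have := Finsupp.support_single_subset h1
              rw [Finset.mem_singleton] at this
              rw [this, hL]
            · rw [Pi.single_eq_of_ne hij, zero_mul] at h1
              simp at h1
          · have := (IH (FreeGroup.mk L) hLm u h1).1
            rwa [hL] at this
        constructor
        · rw [List.length_cons]; omega
        · intro he _; rw [List.length_cons] at he; omega
      · -- first letter has the "negative" sign
        have hc' : c = !b := by cases c <;> cases b <;> simp_all
        have hwtb : w = (tb b j)⁻¹ * FreeGroup.mk L := by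
          rw [← FreeGroup.mk_toWord (x := w), hW, hc', mk_cons_tb_inv]
        have hdw : d k b w i
            = d k b ((tb b j)⁻¹) i * MonoidAlgebra.of k _ (FreeGroup.mk L)
              + d k b (FreeGroup.mk L) i := by
          conv_lhs => rw [hwtb, d_mul]
        rw [hdw, d_tb_inv] at hu
        rcases Finset.mem_union.mp (Finsupp.support_add hu) with h1 | h1
        · rcases eq_or_ne i j with rfl | hij
          · rw [Pi.single_eq_same, neg_mul, ← map_mul, ← hwtb] at h1
            change u ∈ (MonoidAlgebra.coeff (-(MonoidAlgebra.of k (FreeGroup (Fin n)) w))).support at h1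
            rw [MonoidAlgebra.coeff_neg, Finsupp.support_neg] at h1
            have hu_eq : u = w := by
              have := Finsupp.support_single_subset h1
              rwa [Finset.mem_singleton] at this
            constructor
            · rw [hu_eq, hW]
            · intro _ _
              rw [hc']
              rfl
          · rw [Pi.single_eq_of_ne hij, zero_mul] at h1
            simp at h1
        · have hb := (IH (FreeGroup.mk L) hLm u h1).1
          rw [hL] at hb
          constructor
          · rw [List.length_cons]; omega
          · intro he _; rw [List.length_cons] at he; omega

end FoxAux

namespace FoxAux
variable {k : Type*} [CommRing k] {n : ℕ}

lemma support_D_subset (b : Bool) (i : Fin n) (γ : MonoidAlgebra k (FreeGroup (Fin n))) :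
    (D k b i γ).coeff.support ⊆ γ.coeff.support.biUnion fun w => (d k b w i).coeff.support := by
  intro u hu
  have hD : D k b i γ = γ.coeff.sum fun w c => c • d k b w i := rfl
  rw [hD, MonoidAlgebra.coeff_finsuppSum] at hu
  have := Finsupp.support_sum hu
  rw [Finset.mem_biUnion] at this ⊢
  obtain ⟨w, hw, hu'⟩ := this
  rw [MonoidAlgebra.coeff_smul] at hu'
  exact ⟨w, hw, Finsupp.support_smul hu'⟩

lemma flen_D_le (b : Bool) (i : Fin n) (γ : MonoidAlgebra k (FreeGroup (Fin n))) :
    flen (D k b i γ) ≤ flen γ := by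
  rw [flen]
  apply Finset.sup_le
  intro u hu
  obtain ⟨w, hw, hu'⟩ := Finset.mem_biUnion.mp (support_D_subset b i γ hu)
  have h1 := (key b i w.toWord.length w le_rfl u hu').1
  exact le_trans h1 (Finset.le_sup (f := fun w => (FreeGroup.toWord w).length) hw)

lemma exists_max (b : Bool) (i : Fin n) (γ : MonoidAlgebra k (FreeGroup (Fin n)))
    (hEq : flen (D k b i γ) = flen γ) (h1 : 1 ≤ flen γ) :
    ∃ w ∈ γ.coeff.support, w.toWord.length = flen γ ∧ w.toWord.head? = some (i, !b) := by
  have hne : (D k b i γ).coeff.support.Nonempty := by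
    by_contra h
    rw [Finset.not_nonempty_iff_eq_empty] at h
    have h0 : flen (D k b i γ) = 0 := by rw [flen, h]; rfl
    omega
  obtain ⟨u, hu, hmax⟩ := Finset.exists_mem_eq_sup _ hne
    (fun w => (FreeGroup.toWord w).length)
  obtain ⟨w, hw, hu'⟩ := Finset.mem_biUnion.mp (support_D_subset b i γ hu)
  have hk := key b i w.toWord.length w le_rfl u hu'
  have hwle : w.toWord.length ≤ flen γ :=
    Finset.le_sup (f := fun w => (FreeGroup.toWord w).length) hw
  have hulen : u.toWord.length = flen γ := by rw [← hEq, flen, ← hmax]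
  have hkl := hk.1
  have hwlen : w.toWord.length = flen γ := by omega
  exact ⟨w, hw, hwlen, hk.2 (by omega) (by omega)⟩

lemma unique (b : Bool) (γ : MonoidAlgebra k (FreeGroup (Fin n)))
    (d' : Fin n → MonoidAlgebra k (FreeGroup (Fin n)))
    (h : γ = freeGroupAug k n γ • (1 : MonoidAlgebra k (FreeGroup (Fin n)))
      + ∑ i : Fin n, (MonoidAlgebra.of k (FreeGroup (Fin n)) (tb b i) - 1) * d' i) :
    d' = fun i => D k b i γ := by
  have h2 := gamma_eq b γ
  have h3 : ∑ i : Fin n, (MonoidAlgebra.of k (FreeGroup (Fin n)) (tb b i) - 1)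
      * (d' i - D k b i γ) = 0 := by
    have h4 := add_left_cancel (h.symm.trans h2)
    calc ∑ i : Fin n, (MonoidAlgebra.of k (FreeGroup (Fin n)) (tb b i) - 1)
          * (d' i - D k b i γ)
        = ∑ i : Fin n, ((MonoidAlgebra.of k (FreeGroup (Fin n)) (tb b i) - 1) * d' i
            - (MonoidAlgebra.of k (FreeGroup (Fin n)) (tb b i) - 1) * D k b i γ) := by
          refine Finset.sum_congr rfl fun i _ => ?_
          rw [mul_sub]
      _ = 0 := by rw [Finset.sum_sub_distrib, h4, sub_self]
  have h4 := eq_zero_of_sum b _ h3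
  funext i
  have h5 := congrFun h4 i
  simp only [Pi.zero_apply, sub_eq_zero] at h5
  exact h5

lemma final (b : Bool) (γ : MonoidAlgebra k (FreeGroup (Fin n))) :
    (∃! d : Fin n → MonoidAlgebra k (FreeGroup (Fin n)),
        γ = freeGroupAug k n γ • (1 : MonoidAlgebra k (FreeGroup (Fin n)))
          + ∑ i : Fin n, (MonoidAlgebra.of k (FreeGroup (Fin n)) (tb b i) - 1) * d i) ∧
      ∀ d : Fin n → MonoidAlgebra k (FreeGroup (Fin n)),
        γ = freeGroupAug k n γ • (1 : MonoidAlgebra k (FreeGroup (Fin n)))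
          + ∑ i : Fin n, (MonoidAlgebra.of k (FreeGroup (Fin n)) (tb b i) - 1) * d i →
        (∀ i, flen (d i) ≤ flen γ) ∧
        ∀ i, flen (d i) = flen γ → 1 ≤ flen γ →
          ∃ w ∈ γ.coeff.support, (FreeGroup.toWord w).length = flen γ ∧
            (FreeGroup.toWord w).head? = some (i, !b) := by
  constructor
  · exact ⟨fun i => D k b i γ, gamma_eq b γ, fun d' h => unique b γ d' h⟩
  · intro d' h
    have hd : d' = fun i => D k b i γ := unique b γ d' h
    constructor
    · intro i; rw [hd]; exact flen_D_le b i γ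
    · intro i hflen h1
      rw [hd] at hflen
      exact exists_max b i γ hflen h1

end FoxAux

/-- Existence, uniqueness and length estimates for Fox derivatives: every free polynomial
`γ` has a unique family of right cofactors with respect to `t i - 1` (resp. `t i⁻¹ - 1`),
each cofactor has length at most `ℓ(γ)`, and equality (with `ℓ(γ) ≥ 1`) forces a strictly
maximal word of `γ` beginning with `t i⁻¹` (resp. `t i`). -/
theorem stmt13 (k : Type*) [Field k] (n : ℕ) (hn : 1 ≤ n)
    (γ : MonoidAlgebra k (FreeGroup (Fin n))) :
    ((∃! d : Fin n → MonoidAlgebra k (FreeGroup (Fin n)),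
        γ = freeGroupAug k n γ • (1 : MonoidAlgebra k (FreeGroup (Fin n)))
          + ∑ i : Fin n,
              ((MonoidAlgebra.of k (FreeGroup (Fin n)) (FreeGroup.of i)
                : MonoidAlgebra k (FreeGroup (Fin n))) - 1) * d i) ∧
      ∀ d : Fin n → MonoidAlgebra k (FreeGroup (Fin n)),
        γ = freeGroupAug k n γ • (1 : MonoidAlgebra k (FreeGroup (Fin n)))
          + ∑ i : Fin n,
              ((MonoidAlgebra.of k (FreeGroup (Fin n)) (FreeGroup.of i)
                : MonoidAlgebra k (FreeGroup (Fin n))) - 1) * d i →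
        (∀ i, flen (d i) ≤ flen γ) ∧
        ∀ i, flen (d i) = flen γ → 1 ≤ flen γ →
          ∃ w ∈ γ.coeff.support, (FreeGroup.toWord w).length = flen γ ∧
            (FreeGroup.toWord w).head? = some (i, false)) ∧
    ((∃! d : Fin n → MonoidAlgebra k (FreeGroup (Fin n)),
        γ = freeGroupAug k n γ • (1 : MonoidAlgebra k (FreeGroup (Fin n)))
          + ∑ i : Fin n,
              ((MonoidAlgebra.of k (FreeGroup (Fin n)) (FreeGroup.of i)⁻¹
                : MonoidAlgebra k (FreeGroup (Fin n))) - 1) * d i) ∧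
      ∀ d : Fin n → MonoidAlgebra k (FreeGroup (Fin n)),
        γ = freeGroupAug k n γ • (1 : MonoidAlgebra k (FreeGroup (Fin n)))
          + ∑ i : Fin n,
              ((MonoidAlgebra.of k (FreeGroup (Fin n)) (FreeGroup.of i)⁻¹
                : MonoidAlgebra k (FreeGroup (Fin n))) - 1) * d i →
        (∀ i, flen (d i) ≤ flen γ) ∧
        ∀ i, flen (d i) = flen γ → 1 ≤ flen γ →
          ∃ w ∈ γ.coeff.support, (FreeGroup.toWord w).length = flen γ ∧
            (FreeGroup.toWord w).head? = some (i, true)) := by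
  exact ⟨FoxAux.final true γ, FoxAux.final false γ⟩
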